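/- arXiv:1312.4257 — 2 statements merged into one kernel-verified Lean document; each statement's English description precedes it below -/
import Mathlib

section
/- Let M be a monoidal category with unit object 1, let π : 1 → e be a closed idempotent arrow (i.e. both π ⊗ id_e : 1 ⊗ e → e ⊗ e and id_e ⊗ π : e ⊗ 1 → e ⊗ e are isomorphisms), and let φ : e → f be any morphism in M. Then the composite π' = φ ∘ π : 1 → f is a closed idempotent arrow in M if and only if φ : e → f is a closed idempotent arrow in the monoidal category eMe (whose tensor is the restriction of ⊗ and whose unit is e). -/
open CategoryTheory MonoidalCategory

lemma aux_whiskerRight_tensor' {C : Type*} [Category C] [MonoidalCategory C]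
    {A B : C} (g : A ⟶ B) (Y Z : C) :
    g ▷ (Y ⊗ Z) = (α_ A Y Z).inv ≫ (g ▷ Y) ▷ Z ≫ (α_ B Y Z).hom := by
  simp

lemma aux_tensor_whiskerLeft' {C : Type*} [Category C] [MonoidalCategory C]
    (Y Z : C) {A B : C} (g : A ⟶ B) :
    (Y ⊗ Z) ◁ g = (α_ Y Z A).hom ≫ Y ◁ (Z ◁ g) ≫ (α_ Y Z B).inv := by
  simp

/-- Lemma 1.11 (closed idempotent arrows in the Hecke subcategory `eMe`):
if `π : 𝟙 ⟶ e` is a closed idempotent arrow and `φ : e ⟶ f` is any morphism with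
`f` an object of `eMe` (i.e. `f ≅ e ⊗ X ⊗ e`), then `π ≫ φ : 𝟙 ⟶ f` is a closed
idempotent arrow in `M` iff `φ` is a closed idempotent arrow in the monoidal category
`eMe` (whose tensor is the restriction of `⊗` and whose unit is `e`). -/
theorem stmt0 {C : Type*} [Category C] [MonoidalCategory C]
    (e f : C) (π : 𝟙_ C ⟶ e)
    (hπ1 : IsIso (π ▷ e)) (hπ2 : IsIso (e ◁ π))
    (X : C) (hf : f ≅ e ⊗ X ⊗ e) (φ : e ⟶ f) :
    (IsIso ((π ≫ φ) ▷ f) ∧ IsIso (f ◁ (π ≫ φ))) ↔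
      (IsIso (φ ▷ f) ∧ IsIso (f ◁ φ)) := by
  -- `π ▷ (e ⊗ X ⊗ e)` is an isomorphism
  have h1 : IsIso (π ▷ (e ⊗ X ⊗ e)) := by
    rw [aux_whiskerRight_tensor' π e (X ⊗ e)]
    infer_instance
  -- `(e ⊗ X ⊗ e) ◁ π` is an isomorphism
  have hXe : IsIso ((X ⊗ e) ◁ π) := by
    rw [aux_tensor_whiskerLeft' X e π]; infer_instance
  have h2 : IsIso ((e ⊗ X ⊗ e) ◁ π) := by
    rw [aux_tensor_whiskerLeft' e (X ⊗ e) π]; infer_instance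
  -- transfer to `f` on the left
  have hπf : IsIso (π ▷ f) := by
    have comm : π ▷ f = 𝟙_ C ◁ hf.hom ≫ π ▷ (e ⊗ X ⊗ e) ≫ e ◁ hf.inv := by
      rw [whisker_exchange_assoc]
      simp
    rw [comm]; infer_instance
  -- transfer to `f` on the right
  have hfπ : IsIso (f ◁ π) := by
    have comm : f ◁ π = hf.hom ▷ (𝟙_ C) ≫ (e ⊗ X ⊗ e) ◁ π ≫ hf.inv ▷ e := by
      rw [← whisker_exchange_assoc]
      simp
    rw [comm]; infer_instance
  have key : (π ≫ φ) ▷ f = π ▷ f ≫ φ ▷ f := by simp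
  have key2 : f ◁ (π ≫ φ) = f ◁ π ≫ f ◁ φ := by simp
  constructor
  · rintro ⟨ha, hb⟩
    rw [key] at ha
    rw [key2] at hb
    exact ⟨IsIso.of_isIso_comp_left (π ▷ f) (φ ▷ f),
      IsIso.of_isIso_comp_left (f ◁ π) (f ◁ φ)⟩
  · rintro ⟨ha, hb⟩
    rw [key, key2]
    constructor <;> infer_instance
end

section
/- Let M be a triangulated monoidal category (the tensor product is bitriangulated) and let e →^π 1 →^{π'} e' → e[1] be a distinguished triangle. Then π is an open idempotent arrow if and only if π' is a closed idempotent arrow, and in either case e ⊗ e' = 0 = e' ⊗ e. -/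
open CategoryTheory Category Limits Pretriangulated MonoidalCategory

/-- In a triangulated monoidal category (tensor product exact in each variable),
given a distinguished triangle `e ⟶ 𝟙 ⟶ e' ⟶ e[1]`, the arrow `π : e ⟶ 𝟙` is an
open idempotent arrow iff `π' : 𝟙 ⟶ e'` is a closed idempotent arrow, and in either
case `e ⊗ e' = 0 = e' ⊗ e`. -/
theorem stmt1 {C : Type*} [Category C] [MonoidalCategory C] [Preadditive C]
    [HasZeroObject C] [HasShift C ℤ] [∀ n : ℤ, (shiftFunctor C n).Additive]
    [Pretriangulated C]
    [∀ X : C, (tensorLeft X).CommShift ℤ] [∀ X : C, (tensorRight X).CommShift ℤ]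
    [∀ X : C, (tensorLeft X).IsTriangulated] [∀ X : C, (tensorRight X).IsTriangulated]
    (e e' : C) (π : e ⟶ 𝟙_ C) (π' : 𝟙_ C ⟶ e') (δ : e' ⟶ e⟦(1 : ℤ)⟧)
    (hdist : Triangle.mk π π' δ ∈ distTriang C) :
    ((IsIso (π ▷ e) ∧ IsIso (e ◁ π)) ↔ (IsIso (π' ▷ e') ∧ IsIso (e' ◁ π'))) ∧
      (((IsIso (π ▷ e) ∧ IsIso (e ◁ π)) ∨ (IsIso (π' ▷ e') ∧ IsIso (e' ◁ π'))) →
        IsZero (e ⊗ e') ∧ IsZero (e' ⊗ e)) := by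
  have h1 : IsIso (e ◁ π) ↔ IsZero (e ⊗ e') :=
    (Triangle.isZero₃_iff_isIso₁ _ ((tensorLeft e).map_distinguished _ hdist)).symm
  have h2 : IsIso (π ▷ e) ↔ IsZero (e' ⊗ e) :=
    (Triangle.isZero₃_iff_isIso₁ _ ((tensorRight e).map_distinguished _ hdist)).symm
  have h3 : IsIso (e' ◁ π') ↔ IsZero (e' ⊗ e) :=
    (Triangle.isZero₁_iff_isIso₂ _ ((tensorLeft e').map_distinguished _ hdist)).symm
  have h4 : IsIso (π' ▷ e') ↔ IsZero (e ⊗ e') :=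
    (Triangle.isZero₁_iff_isIso₂ _ ((tensorRight e').map_distinguished _ hdist)).symm
  rw [h1, h2, h3, h4]
  exact ⟨and_comm, by tauto⟩
end
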